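/- Fix x=(x₂,x₃)∈ℝ² and set n = x₂² − x₃². Let g be either g_A(r) = −(1/√2)·r·x₂·x₃·e^{−2π r x₃²} or g_B(r) = (1/(4√2·π))·e^{−2π r x₃²}. Define F on the upper half plane ℍ by F(u+iv) = −(∫_v^∞ g(r)·r^{−3/2} dr)·e^{πin(u+iv)}. Then F is differentiable and −2i·v²·(1/2)·(∂F/∂u + i·∂F/∂v)(u+iv) = v^{1/2}·g(v)·e^{πin(u+iv)} for all u∈ℝ, v>0. (This is the identity L ψ̃₀,₁(x,τ) = ψ₀,₁(x,τ) of paper Lemma 5.12, where L = −2iv²·∂/∂τ̄ is the Maass lowering operator of the weight-2 function ψ̃₀,₁(x,τ) and v^{1/2}g(v)e^{πinτ} are the components of ψ₀,₁(x,τ).) -/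

import Mathlib

open MeasureTheory

/-- Paper Lemma 5.12, identity `Lψ̃₀,₁(x,τ) = ψ₀,₁(x,τ)`: fix `x = (x₂,x₃) ∈ ℝ²`,
set `n = x₂² - x₃²`, and let `g` be either component `g_A` or `g_B` of `ψ⁰₀,₁(√r·x)`.
Define `F(u+iv) = -(∫_v^∞ g(r)·r^{-3/2} dr)·e^{πin(u+iv)}` on the upper half plane.
Then `F` is differentiable and
`-2i·v²·(1/2)·(∂F/∂u + i·∂F/∂v)(u+iv) = v^{1/2}·g(v)·e^{πin(u+iv)}` for `v > 0`. -/
theorem stmt15 (x₂ x₃ : ℝ) (g : ℝ → ℝ)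
    (hg : (∀ r : ℝ, g r = -(1 / Real.sqrt 2) * r * x₂ * x₃ *
            Real.exp (-(2 * Real.pi * r * x₃ ^ 2))) ∨
          (∀ r : ℝ, g r = 1 / (4 * Real.sqrt 2 * Real.pi) *
            Real.exp (-(2 * Real.pi * r * x₃ ^ 2))))
    (F : ℝ → ℝ → ℂ)
    (hF : ∀ u v : ℝ, F u v =
      -((∫ r in Set.Ioi v, g r * r ^ (-(3:ℝ)/2) : ℝ) : ℂ) *
        Complex.exp (Real.pi * Complex.I * ((x₂ ^ 2 - x₃ ^ 2 : ℝ) : ℂ) *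
          ((u : ℂ) + Complex.I * (v : ℂ))))
    (u v : ℝ) (hv : 0 < v) :
    ∃ du dv : ℂ,
      HasDerivAt (fun u' : ℝ => F u' v) du u ∧
      HasDerivAt (fun v' : ℝ => F u v') dv v ∧
      -2 * Complex.I * ((v : ℂ)) ^ 2 * (1/2) * (du + Complex.I * dv)
        = ((Real.sqrt v : ℝ) : ℂ) * ((g v : ℝ) : ℂ) *
            Complex.exp (Real.pi * Complex.I * ((x₂ ^ 2 - x₃ ^ 2 : ℝ) : ℂ) *
              ((u : ℂ) + Complex.I * (v : ℂ))) := by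
  set h : ℝ → ℝ := fun r => g r * r ^ (-(3:ℝ)/2) with hh
  -- continuity of g
  have hgc : Continuous g := by
    rcases hg with hg | hg
    · rw [funext hg]; fun_prop
    · rw [funext hg]; fun_prop
  -- uniform bound on g on (0,∞)
  have hbound : ∃ C : ℝ, ∀ r : ℝ, 0 < r → |g r| ≤ C := by
    rcases hg with hg | hg
    · by_cases hx3 : x₃ = 0
      · exact ⟨0, fun r hr => by simp [hg r, hx3]⟩
      · set a : ℝ := 2 * Real.pi * x₃ ^ 2 with ha
        have ha0 : 0 < a := by positivity
        refine ⟨1 / Real.sqrt 2 * |x₂| * |x₃| * (1 / a), fun r hr => ?_⟩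
        have habs : |g r| = 1 / Real.sqrt 2 * |x₂| * |x₃| *
            (r * Real.exp (-(2 * Real.pi * r * x₃ ^ 2))) := by
          rw [hg r, abs_mul, abs_mul, abs_mul, abs_mul, abs_neg,
            abs_of_nonneg (by positivity : (0:ℝ) ≤ 1 / Real.sqrt 2),
            abs_of_pos hr, abs_of_pos (Real.exp_pos _)]
          ring
        have hkey : r * Real.exp (-(2 * Real.pi * r * x₃ ^ 2)) ≤ 1 / a := by
          have h1 : a * r ≤ Real.exp (a * r) := by
            have := Real.add_one_le_exp (a * r); linarith
          have h2 : -(2 * Real.pi * r * x₃ ^ 2) = -(a * r) := by rw [ha]; ring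
          rw [h2, Real.exp_neg]
          calc r * (Real.exp (a * r))⁻¹ = r / Real.exp (a * r) := by ring
            _ ≤ 1 / a := by
                rw [div_le_div_iff₀ (Real.exp_pos _) ha0]
                nlinarith [h1]
        rw [habs]
        exact mul_le_mul_of_nonneg_left hkey (by positivity)
    · refine ⟨1 / (4 * Real.sqrt 2 * Real.pi), fun r hr => ?_⟩
      rw [hg r, abs_mul, abs_of_nonneg (by positivity : (0:ℝ) ≤ 1 / (4 * Real.sqrt 2 * Real.pi)),
        abs_of_pos (Real.exp_pos _)]
      have h1 : Real.exp (-(2 * Real.pi * r * x₃ ^ 2)) ≤ 1 := by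
        rw [Real.exp_le_one_iff]
        have : 0 ≤ 2 * Real.pi * r * x₃ ^ 2 := by positivity
        linarith
      have hc' : (0:ℝ) ≤ 1 / (4 * Real.sqrt 2 * Real.pi) := by positivity
      exact mul_le_of_le_one_right hc' h1
  -- continuity of h away from 0
  have hhca : ∀ w : ℝ, 0 < w → ContinuousAt h w := fun w hw =>
    hgc.continuousAt.mul (Real.continuousAt_rpow_const w _ (Or.inl hw.ne'))
  -- integrability of h on (w,∞) for w > 0
  have hint : ∀ w : ℝ, 0 < w → IntegrableOn h (Set.Ioi w) := by
    intro w hw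
    obtain ⟨C, hC⟩ := hbound
    have hC0 : 0 ≤ C := le_trans (abs_nonneg _) (hC (w + 1) (by linarith))
    have base : IntegrableOn (fun r : ℝ => C * r ^ (-(3:ℝ)/2)) (Set.Ioi w) :=
      (integrableOn_Ioi_rpow_of_lt (by norm_num) hw).const_mul C
    refine base.mono' ?_ ?_
    · exact ContinuousOn.aestronglyMeasurable
        (fun r hr => (hhca r (hw.trans hr)).continuousWithinAt) measurableSet_Ioi
    · filter_upwards [self_mem_ae_restrict measurableSet_Ioi] with r hr
      have hr0 : 0 < r := hw.trans hr
      have : ‖h r‖ = |g r| * r ^ (-(3:ℝ)/2) := by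
        rw [hh, Real.norm_eq_abs, abs_mul, abs_of_nonneg (Real.rpow_nonneg hr0.le _)]
      rw [this]
      exact mul_le_mul_of_nonneg_right (hC r hr0) (Real.rpow_nonneg hr0.le _)
  -- derivative of the tail integral
  have hc : (0:ℝ) < v / 2 := by linarith
  have hG : HasDerivAt (fun w => ∫ r in Set.Ioi w, h r) (-(h v)) v := by
    have key : ∀ w ∈ Set.Ioi (v / 2), (∫ r in Set.Ioi w, h r) =
        (∫ r in Set.Ioi (v / 2), h r) - ∫ r in (v / 2)..w, h r := by
      intro w hw
      have hw' : v / 2 < w := hw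
      have hw0 : 0 < w := hc.trans hw'
      have hsplit : (∫ r in Set.Ioi (v / 2), h r) =
          (∫ r in Set.Ioc (v / 2) w, h r) + ∫ r in Set.Ioi w, h r := by
        rw [← MeasureTheory.setIntegral_union Set.Ioc_disjoint_Ioi_same measurableSet_Ioi
          ((hint _ hc).mono_set Set.Ioc_subset_Ioi_self) (hint w hw0),
          Set.Ioc_union_Ioi_eq_Ioi hw'.le]
      rw [intervalIntegral.integral_of_le hw'.le]
      rw [hsplit]; ring
    have hFTC : HasDerivAt (fun w => ∫ r in (v / 2)..w, h r) (h v) v := by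
      apply intervalIntegral.integral_hasDerivAt_right
      · rw [intervalIntegrable_iff_integrableOn_Ioc_of_le (by linarith)]
        exact (hint _ hc).mono_set Set.Ioc_subset_Ioi_self
      · exact ⟨Set.Ioi (v / 2), Ioi_mem_nhds (by linarith),
          ContinuousOn.aestronglyMeasurable
            (fun r hr => (hhca r (hc.trans hr)).continuousWithinAt) measurableSet_Ioi⟩
      · exact hhca v hv
    have := (hFTC.const_sub (∫ r in Set.Ioi (v / 2), h r))
    exact this.congr_of_eventuallyEq
      (Filter.eventuallyEq_of_mem (Ioi_mem_nhds (by linarith : v / 2 < v)) key)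
  -- set up complex notation
  set c : ℂ := (Real.pi : ℂ) * Complex.I * ((x₂ ^ 2 - x₃ ^ 2 : ℝ) : ℂ) with hcdef
  set G : ℝ → ℝ := fun w => ∫ r in Set.Ioi w, h r with hGdef
  -- derivative in u
  have h1 : HasDerivAt (fun z : ℂ => Complex.exp (c * (z + Complex.I * (v : ℂ))))
      (Complex.exp (c * ((u : ℂ) + Complex.I * (v : ℂ))) * c) u := by
    have : HasDerivAt (fun z : ℂ => c * (z + Complex.I * (v : ℂ))) c u := by
      simpa using ((hasDerivAt_id ((u : ℝ) : ℂ)).add_const (Complex.I * (v : ℂ))).const_mul c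
    exact this.cexp
  have hdu : HasDerivAt (fun u' : ℝ => F u' v)
      (-((G v : ℝ) : ℂ) * (Complex.exp (c * ((u : ℂ) + Complex.I * (v : ℂ))) * c)) u := by
    have := (h1.comp_ofReal).const_mul (-((G v : ℝ) : ℂ))
    exact this.congr_of_eventuallyEq (Filter.Eventually.of_forall fun u' => by
      simp only [hF, hGdef])
  -- derivative in v
  have h2 : HasDerivAt (fun z : ℂ => Complex.exp (c * ((u : ℂ) + Complex.I * z)))
      (Complex.exp (c * ((u : ℂ) + Complex.I * (v : ℂ))) * (c * Complex.I)) v := by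
    have : HasDerivAt (fun z : ℂ => c * ((u : ℂ) + Complex.I * z)) (c * Complex.I) v := by
      simpa using (((hasDerivAt_id ((v : ℝ) : ℂ)).const_mul Complex.I).const_add
        ((u : ℝ) : ℂ)).const_mul c
    exact this.cexp
  have hGneg : HasDerivAt (fun v' : ℝ => (-((G v' : ℝ) : ℂ))) ((h v : ℝ) : ℂ) v := by
    have := (hG.neg).ofReal_comp
    simpa using this
  have hdv : HasDerivAt (fun v' : ℝ => F u v')
      (((h v : ℝ) : ℂ) * Complex.exp (c * ((u : ℂ) + Complex.I * (v : ℂ))) +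
        (-((G v : ℝ) : ℂ)) * (Complex.exp (c * ((u : ℂ) + Complex.I * (v : ℂ))) * (c * Complex.I))) v := by
    have := hGneg.mul (h2.comp_ofReal)
    exact this.congr_of_eventuallyEq (Filter.Eventually.of_forall fun v' => by
      simp only [hF, hGdef, Pi.mul_apply])
  refine ⟨_, _, hdu, hdv, ?_⟩
  -- final algebra
  have keyC : ((v : ℂ)) ^ 2 * (((v : ℝ) ^ (-(3:ℝ)/2) : ℝ) : ℂ) = ((Real.sqrt v : ℝ) : ℂ) := by
    have keyR : v ^ (2:ℕ) * v ^ (-(3:ℝ)/2) = Real.sqrt v := by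
      rw [Real.sqrt_eq_rpow, ← Real.rpow_natCast v 2, ← Real.rpow_add hv]
      congr 1
      push_cast
      norm_num
    rw [← Complex.ofReal_pow, ← Complex.ofReal_mul, keyR]
  have hhv : ((h v : ℝ) : ℂ) = ((g v : ℝ) : ℂ) * (((v : ℝ) ^ (-(3:ℝ)/2) : ℝ) : ℂ) := by
    rw [hh]; push_cast; ring
  rw [hhv]
  rw [show (Real.pi : ℂ) * Complex.I * ((x₂ ^ 2 - x₃ ^ 2 : ℝ) : ℂ) *
      ((u : ℂ) + Complex.I * (v : ℂ)) = c * ((u : ℂ) + Complex.I * (v : ℂ)) from rfl]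
  set E : ℂ := Complex.exp (c * ((u : ℂ) + Complex.I * (v : ℂ))) with hE
  clear_value E
  clear hcdef
  clear_value c
  linear_combination (-((v:ℂ)^2 * ((g v : ℝ) : ℂ) * (((v : ℝ) ^ (-(3:ℝ)/2) : ℝ) : ℂ) * E)
      + ((G v : ℝ) : ℂ) * (v:ℂ)^2 * E * c) * Complex.I_mul_I
    + (((g v : ℝ) : ℂ) * E) * keyC
    + ((v:ℂ)^2 * ((G v : ℝ) : ℂ) * E * c * (Complex.I - 1)) * Complex.I_mul_I
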